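/- arXiv:0907.4276 — 2 statements merged into one kernel-verified Lean document; each statement's English description precedes it below -/
import Mathlib

section
/- Let (X,r) be a square-free solution of arbitrary cardinality. Then mpl(X,r) ≤ m if and only if for all x, y₁, …, y_m ∈ X the identity (⋯((y_m ▷ y_{m-1}) ▷ y_{m-2}) ▷ ⋯ ▷ y₁) ▷ x = (⋯(y_{m-1} ▷ y_{m-2}) ▷ ⋯ ▷ y₁) ▷ x holds, where a ▷ b denotes the left action ᵃb = L_a(b). -/
namespace YBPaper

variable {X : Type*}

/-- Left translation: `lact r x y = ˣy`. -/
def lact (r : X × X → X × X) (x y : X) : X := (r (x, y)).1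

/-- Right translation: `ract r x y = xʸ`. -/
def ract (r : X × X → X × X) (x y : X) : X := (r (x, y)).2

def r12 (r : X × X → X × X) : X × X × X → X × X × X :=
  fun p => ((r (p.1, p.2.1)).1, (r (p.1, p.2.1)).2, p.2.2)

def r23 (r : X × X → X × X) : X × X × X → X × X × X :=
  fun p => (p.1, r (p.2.1, p.2.2))

/-- A non-degenerate involutive square-free set-theoretic solution of the YBE. -/
structure IsSquareFreeSolution (r : X × X → X × X) : Prop where
  nondegL : ∀ x : X, Function.Bijective fun y => (r (x, y)).1
  nondegR : ∀ y : X, Function.Bijective fun x => (r (x, y)).2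
  invol : ∀ p : X × X, r (r p) = p
  sqfree : ∀ x : X, r (x, x) = (x, x)
  braided : ∀ p : X × X × X, r12 r (r23 r (r12 r p)) = r23 r (r12 r (r23 r p))

/-- `relk l k x y` means the images of `x` and `y` in the `k`-th retract coincide. -/
def relk (l : X → X → X) : ℕ → X → X → Prop
  | 0 => fun x y => x = y
  | (k+1) => fun x y => ∀ z : X, relk l k (l x z) (l y z)

/-- `mplLe l m` : the `m`-th retract is a one-element solution, i.e. `mpl ≤ m`. -/
def mplLe (l : X → X → X) (m : ℕ) : Prop := ∀ x y : X, relk l m x y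

/-- `mplEq l m` : the multipermutation level is exactly `m`. -/
def mplEq (l : X → X → X) (m : ℕ) : Prop := mplLe l m ∧ ∀ k < m, ¬ mplLe l k

/-- The set of left translations, as permutations. -/
def lperms (r : X × X → X × X) : Set (Equiv.Perm X) :=
  {σ : Equiv.Perm X | ∃ x : X, ∀ y : X, σ y = (r (x, y)).1}

/-- The YB permutation group `𝒢(X,r)`, generated by the left translations. -/
def Gcal (r : X × X → X × X) : Subgroup (Equiv.Perm X) := Subgroup.closure (lperms r)


/-- The tower of actions: `tw l [y₁, …, y_m] x = ((⋯(y_m ▷ y_{m-1}) ▷ ⋯ ▷ y₁) ▷ x`. -/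
def tw (l : X → X → X) : List X → X → X
  | [], x => x
  | y :: ys, x => l (tw l ys y) x

private lemma relk_iff (l : X → X → X) :
    ∀ (k : ℕ) (x y : X), relk l k x y ↔
      ∀ zs : List X, zs.length = k → zs.foldl l x = zs.foldl l y := by
  intro k
  induction k with
  | zero =>
    intro x y
    constructor
    · rintro rfl zs _; rfl
    · intro hf
      exact hf [] rfl
  | succ k ih =>
    intro x y
    constructor
    · intro hr zs hzs
      match zs, hzs with
      | z :: zs, hzs =>
        exact (ih (l x z) (l y z)).mp (hr z) zs (by simpa using hzs)
    · intro hf z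
      exact (ih _ _).mpr fun zs hzs => hf (z :: zs) (by simpa using hzs)

private lemma mplLe_iff (l : X → X → X) (hsq : ∀ x, l x x = x) (m : ℕ) (hm : 1 ≤ m) :
    mplLe l m ↔ ∀ (y z : X) (zs : List X), zs.length + 1 = m →
      zs.foldl l (l y z) = zs.foldl l z := by
  constructor
  · intro H y z zs hzs
    have h1 := (relk_iff l m y z).mp (H y z) (z :: zs) (by simpa using hzs)
    simpa [hsq] using h1
  · intro H x y
    refine (relk_iff l m x y).mpr fun zs hzs => ?_
    match zs, hzs with
    | [], hzs => simp at hzs; omega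
    | z :: zs, hzs =>
      have hz : zs.length + 1 = m := by simpa using hzs
      show zs.foldl l (l x z) = zs.foldl l (l y z)
      rw [H x z zs hz, H y z zs hz]

private lemma tw_concat (l : X → X → X) :
    ∀ (s : List X) (a x : X), tw l (s ++ [a]) x = (s.reverse ++ [x]).foldl l a := by
  intro s
  induction s with
  | nil => intro a x; simp [tw]
  | cons c s ih =>
    intro a x
    show l (tw l (s ++ [a]) c) x = _
    rw [ih a c]
    simp [List.foldl_append]

/-- `mpl(X,r) ≤ m` iff every tower of `m` actions on `x` equals the tower
obtained by deleting the top (leftmost) element `y_m`. -/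
theorem stmt5 {X : Type*} (r : X × X → X × X) (h : IsSquareFreeSolution r)
    (m : ℕ) (hm : 1 ≤ m) :
    mplLe (lact r) m ↔
      ∀ l : List X, l.length = m → ∀ x : X,
        tw (lact r) l x = tw (lact r) l.dropLast x := by
  have hsq : ∀ x : X, lact r x x = x := fun x => by
    simp [lact, h.sqfree x]
  rw [mplLe_iff (lact r) hsq m hm]
  constructor
  · intro H L hL x
    rcases List.eq_nil_or_concat L with rfl | ⟨s, a, rfl⟩
    · simp at hL; omega
    · simp only [List.concat_eq_append] at hL ⊢
      rw [tw_concat, List.dropLast_concat]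
      rcases List.eq_nil_or_concat s with rfl | ⟨s', b, rfl⟩
      · have hm1 : m = 1 := by simpa using hL.symm
        have h1 := H a x ([] : List X) (by simp [hm1])
        simpa [tw] using h1
      · simp only [List.concat_eq_append] at hL ⊢
        rw [tw_concat]
        have hlen : (s'.reverse ++ [x]).length + 1 = m := by
          simp at hL ⊢; omega
        have h1 := H a b (s'.reverse ++ [x]) hlen
        simpa [List.foldl_append] using h1
  · intro H y z zs hzs
    rcases List.eq_nil_or_concat zs with rfl | ⟨q, x, rfl⟩
    · have h1 := H [y] (by simpa using hzs) z
      simpa [tw] using h1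
    · simp only [List.concat_eq_append] at hzs ⊢
      have h1 := H ((q.reverse ++ [z]) ++ [y]) (by simp at hzs ⊢; omega) x
      rw [tw_concat, List.dropLast_concat, tw_concat] at h1
      simpa [List.foldl_append] using h1

end YBPaper
end

section
/- Let (X,r) be a square-free solution of arbitrary cardinality which is a multipermutation solution of level m ≥ 1. Then the structure group G(X,r) is solvable of solvable length at most m, and the permutation group G(X,r) ⊆ Sym(X) is solvable of solvable length at most m − 1. -/
namespace YBPaper

variable {X : Type*}

/-- Relations of the structure group `G(X,r) = ⟨X ∣ xy = (ˣy)(xʸ)⟩`. -/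
def structRels (r : X × X → X × X) : Set (FreeGroup X) :=
  {w | ∃ x y : X, w = FreeGroup.of x * FreeGroup.of y *
        (FreeGroup.of ((r (x, y)).1) * FreeGroup.of ((r (x, y)).2))⁻¹}

section Part1
variable {r : X × X → X × X}

/-- left translation as a permutation -/
noncomputable def lE (h : IsSquareFreeSolution r) (x : X) : Equiv.Perm X := Equiv.ofBijective (lact r x) (h.nondegL x)

lemma lE_apply (h : IsSquareFreeSolution r) (x y : X) : lE h x y = lact r x y := rfl

lemma invol1 (h : IsSquareFreeSolution r) (x y : X) : lact r (lact r x y) (ract r x y) = x := by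
  have := h.invol (x, y)
  have h2 : r (lact r x y, ract r x y) = (x, y) := by
    simpa [lact, ract] using this
  simpa [lact] using congrArg Prod.fst h2

lemma invol2 (h : IsSquareFreeSolution r) (x y : X) : ract r (lact r x y) (ract r x y) = y := by
  have h2 : r (lact r x y, ract r x y) = (x, y) := by
    simpa [lact, ract] using h.invol (x, y)
  simpa [ract] using congrArg Prod.snd h2

lemma sq1 (h : IsSquareFreeSolution r) (x : X) : lact r x x = x := by
  simpa [lact] using congrArg Prod.fst (h.sqfree x)

lemma sq_lE (h : IsSquareFreeSolution r) (x : X) : lE h x x = x := sq1 h x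

lemma ybe1 (h : IsSquareFreeSolution r) (x y z : X) :
    lact r (lact r x y) (lact r (ract r x y) z) = lact r x (lact r y z) := by
  have := h.braided (x, y, z)
  simpa [r12, r23, lact, ract] using congrArg (fun p => p.1) this

/-- `λ_x λ_y = λ_{λ_x y} λ_{ract x y}` as permutations. -/
lemma permK (h : IsSquareFreeSolution r) (x y : X) : lE h (lact r x y) * lE h (ract r x y) = lE h x * lE h y := by
  ext z
  simpa [Equiv.Perm.mul_apply, lE_apply] using ybe1 h x y z

lemma ract_eq (h : IsSquareFreeSolution r) (x y : X) : ract r x y = (lE h (lact r x y))⁻¹ x := by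
  have h2 : (lE h (lact r x y)) (ract r x y) = x := invol1 h x y
  exact (Equiv.eq_symm_apply _).mpr h2

/-- explicit formula for `ract` in the square-free case -/
lemma ract_formula (h : IsSquareFreeSolution r) (x y : X) : ract r x y = (lE h y)⁻¹ ((lE h x)⁻¹ x) := by
  set u := lact r x y
  set v := ract r x y
  set c := (lE h y)⁻¹ ((lE h x)⁻¹ x)
  have hK : lE h u * lE h v = lE h x * lE h y := permK h x y
  have h1 : lE h v c = (lE h u)⁻¹ ((lE h x) ((lE h y) c)) := by
    have h5 : lE h v c = ((lE h u)⁻¹ * (lE h u * lE h v)) c := by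
      simp [Equiv.Perm.mul_apply]
    rw [h5, hK]
    simp [Equiv.Perm.mul_apply]
  have h2 : (lE h x) ((lE h y) c) = x := by simp [c]
  have h3 : lE h v c = v := by rw [h1, h2, ← ract_eq h x y]
  have h4 : lE h v v = v := sq_lE h v
  exact ((lE h v).injective (h3.trans h4.symm)).symm


lemma lact_lE_inv (h : IsSquareFreeSolution r) (x y : X) :
    lact r x ((lE h x)⁻¹ y) = y := by
  show (lE h x) ((lE h x)⁻¹ y) = y
  simp

lemma lE_inv_lact (h : IsSquareFreeSolution r) (x y : X) :
    (lE h x)⁻¹ (lact r x y) = y := by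
  show (lE h x)⁻¹ ((lE h x) y) = y
  simp

lemma lE_inv_self (h : IsSquareFreeSolution r) (x : X) : (lE h x)⁻¹ x = x :=
  ((Equiv.eq_symm_apply _).mpr (sq_lE h x)).symm

lemma lact_decomp (h : IsSquareFreeSolution r) (x z w : X) :
    lact r (lact r x z) w = lact r x (lact r z ((lE h (ract r x z))⁻¹ w)) := by
  have hy := ybe1 h x z ((lE h (ract r x z))⁻¹ w)
  rw [lact_lE_inv h] at hy
  exact hy

lemma lact_decomp' (h : IsSquareFreeSolution r) (x u w : X) :
    lact r ((lE h x)⁻¹ u) w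
      = (lE h x)⁻¹ (lact r u (lact r ((lE h u)⁻¹ x) w)) := by
  have hy := ybe1 h x ((lE h x)⁻¹ u) w
  have h1 : lact r x ((lE h x)⁻¹ u) = u := lact_lE_inv h x u
  rw [h1] at hy
  have h2 : ract r x ((lE h x)⁻¹ u) = (lE h u)⁻¹ x := by
    rw [ract_eq h x ((lE h x)⁻¹ u), h1]
  rw [h2] at hy
  rw [hy, lE_inv_lact h]

end Part1
section Part2
variable {r : X × X → X × X}

lemma relk_refl (l : X → X → X) : ∀ k x, relk l k x x := by
  intro k
  induction k with
  | zero => intro x; rfl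
  | succ k ih => intro x z; exact ih _

lemma relk_symm (l : X → X → X) : ∀ k x y, relk l k x y → relk l k y x := by
  intro k
  induction k with
  | zero => intro x y hxy; exact hxy.symm
  | succ k ih => intro x y hxy z; exact ih _ _ (hxy z)

lemma relk_trans (l : X → X → X) :
    ∀ k x y z, relk l k x y → relk l k y z → relk l k x z := by
  intro k
  induction k with
  | zero => intro x y z hxy hyz; exact hxy.trans hyz
  | succ k ih => intro x y z hxy hyz w; exact ih _ _ _ (hxy w) (hyz w)

lemma relk_mono (l : X → X → X) : ∀ k x y, relk l k x y → relk l (k+1) x y := by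
  intro k
  induction k with
  | zero => intro x y hxy z; rw [hxy]; exact relk_refl l 0 _
  | succ k ih => intro x y hxy z; exact ih _ _ (hxy z)

lemma relk_FQ (h : IsSquareFreeSolution r) :
    ∀ k, (∀ (x z z' : X), relk (lact r) k z z' → relk (lact r) k (lact r x z) (lact r x z'))
       ∧ (∀ (x z z' : X), relk (lact r) k z z' →
            relk (lact r) k ((lE h x)⁻¹ z) ((lE h x)⁻¹ z')) := by
  intro k
  induction k with
  | zero =>
    constructor
    · intro x z z' hzz; rw [show z = z' from hzz]; exact relk_refl _ 0 _
    · intro x z z' hzz; rw [show z = z' from hzz]; exact relk_refl _ 0 _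
  | succ k ih =>
    obtain ⟨F, Q⟩ := ih
    have aux : ∀ z z', relk (lact r) (k+1) z z' →
        ∀ t, relk (lact r) k ((lE h z)⁻¹ t) ((lE h z')⁻¹ t) := by
      intro z z' hzz t
      have h1 := hzz ((lE h z')⁻¹ t)
      rw [lact_lE_inv h] at h1
      have h3 := Q z _ _ h1
      rw [lE_inv_lact h] at h3
      exact relk_symm _ _ _ _ h3
    constructor
    · -- forward
      intro x z z' hzz w
      rw [lact_decomp h x z w, lact_decomp h x z' w,
          ract_formula h x z, ract_formula h x z']
      apply F
      have hvv : relk (lact r) k ((lE h z)⁻¹ ((lE h x)⁻¹ x)) ((lE h z')⁻¹ ((lE h x)⁻¹ x)) :=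
        aux z z' hzz _
      have hw := aux _ _ (relk_mono _ _ _ _ hvv) w
      exact relk_trans _ _ _ _ _ (F z _ _ hw) (hzz _)
    · -- backward
      intro x z z' hzz w
      rw [lact_decomp' h x z w, lact_decomp' h x z' w]
      apply Q
      have hvv : relk (lact r) k ((lE h z)⁻¹ x) ((lE h z')⁻¹ x) := aux z z' hzz x
      have hw : relk (lact r) k (lact r ((lE h z)⁻¹ x) w) (lact r ((lE h z')⁻¹ x) w) :=
        relk_mono _ _ _ _ hvv w
      exact relk_trans _ _ _ _ _ (F z _ _ hw) (hzz _)

lemma relk_F (h : IsSquareFreeSolution r) (k : ℕ) (x z z' : X)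
    (hzz : relk (lact r) k z z') : relk (lact r) k (lact r x z) (lact r x z') :=
  (relk_FQ h k).1 x z z' hzz

lemma relk_Q (h : IsSquareFreeSolution r) (k : ℕ) (x z z' : X)
    (hzz : relk (lact r) k z z') : relk (lact r) k ((lE h x)⁻¹ z) ((lE h x)⁻¹ z') :=
  (relk_FQ h k).2 x z z' hzz

end Part2
section Part3
variable {r : X × X → X × X}

/-- the action of permutations of `X` on `ℤ^(X)` -/
noncomputable def permAct : Equiv.Perm X →* MulAut (Multiplicative (X →₀ ℤ)) :=
  MonoidHom.mk' (fun σ => AddEquiv.toMultiplicative (Finsupp.domCongr σ))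
    (by
      intro σ τ
      ext v : 1
      show Finsupp.equivMapDomain (σ * τ) (v.toAdd) = _
      have h1 : (σ * τ : Equiv.Perm X) = τ.trans σ := rfl
      rw [h1, Finsupp.equivMapDomain_trans]
      rfl)

/-- abbreviation for the induced action on `X →₀ ℤ` -/
noncomputable def sAct (σ : Equiv.Perm X) (v : X →₀ ℤ) : X →₀ ℤ :=
  Finsupp.equivMapDomain σ v

lemma permAct_apply (σ : Equiv.Perm X) (v : X →₀ ℤ) :
    (permAct σ (Multiplicative.ofAdd v)) = Multiplicative.ofAdd (sAct σ v) := rfl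

lemma sAct_single (σ : Equiv.Perm X) (a : X) (n : ℤ) :
    sAct σ (Finsupp.single a n) = Finsupp.single (σ a) n :=
  Finsupp.equivMapDomain_single _ _ _

lemma sAct_add (σ : Equiv.Perm X) (v w : X →₀ ℤ) :
    sAct σ (v + w) = sAct σ v + sAct σ w := by
  simpa [sAct] using (Finsupp.domCongr (M := ℤ) (σ : X ≃ X)).map_add v w

lemma sAct_neg (σ : Equiv.Perm X) (v : X →₀ ℤ) : sAct σ (-v) = -sAct σ v := by
  simpa [sAct] using (Finsupp.domCongr (M := ℤ) (σ : X ≃ X)).map_neg v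

lemma sAct_zero (σ : Equiv.Perm X) : sAct σ (0 : X →₀ ℤ) = 0 :=
  Finsupp.equivMapDomain_zero

lemma sAct_sAct (σ τ : Equiv.Perm X) (v : X →₀ ℤ) :
    sAct σ (sAct τ v) = sAct (σ * τ) v := by
  show _ = Finsupp.equivMapDomain (τ.trans σ) v
  rw [Finsupp.equivMapDomain_trans]
  rfl

lemma sAct_inv_sAct (σ : Equiv.Perm X) (v : X →₀ ℤ) : sAct σ⁻¹ (sAct σ v) = v := by
  rw [sAct_sAct, inv_mul_cancel]
  exact Finsupp.equivMapDomain_refl v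

lemma sAct_one (v : X →₀ ℤ) : sAct (1 : Equiv.Perm X) v = v :=
  Finsupp.equivMapDomain_refl v

/-- the image of a generator in `ℤ^(X) ⋊ Perm X` -/
noncomputable def genIm (h : IsSquareFreeSolution r) (x : X) :
    (Multiplicative (X →₀ ℤ)) ⋊[permAct] Equiv.Perm X :=
  ⟨Multiplicative.ofAdd (Finsupp.single x 1), lE h x⟩

lemma genIm_left (h : IsSquareFreeSolution r) (x : X) :
    (genIm h x).left = Multiplicative.ofAdd (Finsupp.single x 1) := rfl

lemma genIm_right (h : IsSquareFreeSolution r) (x : X) : (genIm h x).right = lE h x := rfl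

lemma relsCheck (h : IsSquareFreeSolution r) :
    ∀ w ∈ structRels r, FreeGroup.lift (genIm h) w = 1 := by
  rintro w ⟨x, y, rfl⟩
  have hxy : FreeGroup.lift (genIm h)
      (FreeGroup.of x * FreeGroup.of y *
        (FreeGroup.of ((r (x, y)).1) * FreeGroup.of ((r (x, y)).2))⁻¹)
      = genIm h x * genIm h y * (genIm h (lact r x y) * genIm h (ract r x y))⁻¹ := by
    simp only [map_mul, map_inv, FreeGroup.lift_apply_of]
    rfl
  rw [hxy, mul_inv_eq_one]
  apply SemidirectProduct.ext
  · rw [SemidirectProduct.mul_left, SemidirectProduct.mul_left]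
    rw [genIm_left, genIm_left, genIm_left, genIm_left, genIm_right, genIm_right]
    rw [permAct_apply, permAct_apply, sAct_single, sAct_single]
    have e1 : (lE h x) y = lact r x y := rfl
    have e2 : (lE h (lact r x y)) (ract r x y) = x := invol1 h x y
    rw [e1, e2, ← ofAdd_add, ← ofAdd_add, add_comm]
  · rw [SemidirectProduct.mul_right, SemidirectProduct.mul_right]
    rw [genIm_right, genIm_right, genIm_right, genIm_right]
    exact (permK h x y).symm

/-- the homomorphism `G(X,r) → ℤ^(X) ⋊ Perm X` -/
noncomputable def phi (h : IsSquareFreeSolution r) :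
    PresentedGroup (structRels r) →* (Multiplicative (X →₀ ℤ)) ⋊[permAct] Equiv.Perm X :=
  PresentedGroup.toGroup (relsCheck h)

/-- the permutation part -/
noncomputable def psiH (h : IsSquareFreeSolution r) :
    PresentedGroup (structRels r) →* Equiv.Perm X :=
  SemidirectProduct.rightHom.comp (phi h)

/-- the cocycle part -/
noncomputable def piF (h : IsSquareFreeSolution r) (g : PresentedGroup (structRels r)) :
    X →₀ ℤ :=
  ((phi h g).left).toAdd

lemma phi_of (h : IsSquareFreeSolution r) (x : X) :
    phi h (PresentedGroup.of x) = genIm h x := PresentedGroup.toGroup.of _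

lemma psiH_apply (h : IsSquareFreeSolution r) (g : PresentedGroup (structRels r)) :
    psiH h g = (phi h g).right := rfl

lemma psi_of (h : IsSquareFreeSolution r) (x : X) :
    psiH h (PresentedGroup.of x) = lE h x := by
  rw [psiH_apply, phi_of, genIm_right]

lemma pi_of (h : IsSquareFreeSolution r) (x : X) :
    piF h (PresentedGroup.of x) = Finsupp.single x 1 := by
  rw [piF, phi_of, genIm_left]
  rfl

lemma pi_mul (h : IsSquareFreeSolution r) (g g' : PresentedGroup (structRels r)) :
    piF h (g * g') = piF h g + sAct (psiH h g) (piF h g') := by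
  rw [piF, map_mul, SemidirectProduct.mul_left]
  rfl

lemma pi_one (h : IsSquareFreeSolution r) : piF h (1 : PresentedGroup (structRels r)) = 0 := by
  rw [piF, map_one]
  rfl

lemma pi_inv (h : IsSquareFreeSolution r) (g : PresentedGroup (structRels r)) :
    piF h (g⁻¹) = - sAct (psiH h g)⁻¹ (piF h g) := by
  have h0 : piF h g + sAct (psiH h g) (piF h g⁻¹) = 0 := by
    rw [← pi_mul, mul_inv_cancel, pi_one]
  have h1 : sAct (psiH h g) (piF h g⁻¹) = -piF h g := by
    have := eq_neg_of_add_eq_zero_right h0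
    exact this
  have h2 := congrArg (sAct (psiH h g)⁻¹) h1
  rw [sAct_inv_sAct] at h2
  rw [h2, sAct_neg]

end Part3
section Part4
variable {r : X × X → X × X}

/-- the defining relations, in the structure group -/
lemma of_mul_of (h : IsSquareFreeSolution r) (a b : X) :
    (PresentedGroup.of a : PresentedGroup (structRels r)) * PresentedGroup.of b
      = PresentedGroup.of (lact r a b) * PresentedGroup.of (ract r a b) := by
  have hmem : (FreeGroup.of a * FreeGroup.of b *
      (FreeGroup.of ((r (a, b)).1) * FreeGroup.of ((r (a, b)).2))⁻¹) ∈ structRels r :=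
    ⟨a, b, rfl⟩
  have h1 : (PresentedGroup.mk (structRels r)) (FreeGroup.of a * FreeGroup.of b *
      (FreeGroup.of ((r (a, b)).1) * FreeGroup.of ((r (a, b)).2))⁻¹) = 1 := by
    have := Subgroup.subset_normalClosure hmem
    exact (QuotientGroup.eq_one_iff _).mpr this
  rw [map_mul, map_mul, map_inv, map_mul] at h1
  exact mul_inv_eq_one.mp h1

/-- one step: multiply by the generator which adds `δ_y` to the cocycle -/
noncomputable def stp (h : IsSquareFreeSolution r) (g : PresentedGroup (structRels r)) (y : X) :
    PresentedGroup (structRels r) :=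
  g * PresentedGroup.of ((psiH h g)⁻¹ y)

noncomputable def unstp (h : IsSquareFreeSolution r) (g : PresentedGroup (structRels r)) (y : X) :
    PresentedGroup (structRels r) :=
  g * (PresentedGroup.of ((psiH h g)⁻¹ y))⁻¹

lemma psi_stp (h : IsSquareFreeSolution r) (g : PresentedGroup (structRels r)) (y : X) :
    psiH h (stp h g y) = psiH h g * lE h ((psiH h g)⁻¹ y) := by
  rw [stp, map_mul, psi_of]

lemma psi_unstp (h : IsSquareFreeSolution r) (g : PresentedGroup (structRels r)) (y : X) :
    psiH h (unstp h g y) = psiH h g * (lE h ((psiH h g)⁻¹ y))⁻¹ := by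
  rw [unstp, map_mul, map_inv, psi_of]

lemma unstp_stp (h : IsSquareFreeSolution r) (g : PresentedGroup (structRels r)) (y : X) :
    unstp h (stp h g y) y = g := by
  rw [unstp, psi_stp]
  have h1 : (psiH h g * lE h ((psiH h g)⁻¹ y))⁻¹ y = (psiH h g)⁻¹ y := by
    rw [mul_inv_rev]
    show (lE h ((psiH h g)⁻¹ y))⁻¹ ((psiH h g)⁻¹ y) = _
    rw [lE_inv_self h]
  rw [h1, stp, mul_assoc, mul_inv_cancel, mul_one]

lemma stp_unstp (h : IsSquareFreeSolution r) (g : PresentedGroup (structRels r)) (y : X) :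
    stp h (unstp h g y) y = g := by
  rw [stp, psi_unstp]
  have h1 : (psiH h g * (lE h ((psiH h g)⁻¹ y))⁻¹)⁻¹ y = (psiH h g)⁻¹ y := by
    rw [mul_inv_rev, inv_inv]
    show (lE h ((psiH h g)⁻¹ y)) ((psiH h g)⁻¹ y) = _
    rw [sq_lE h]
  rw [h1, unstp, mul_assoc, inv_mul_cancel, mul_one]

/-- steps commute -/
lemma stp_stp (h : IsSquareFreeSolution r) (g : PresentedGroup (structRels r)) (y z : X) :
    stp h (stp h g y) z = stp h (stp h g z) y := by
  have key : ∀ u w : X,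
      (PresentedGroup.of ((psiH h g)⁻¹ u) : PresentedGroup (structRels r)) *
        PresentedGroup.of ((lE h ((psiH h g)⁻¹ u))⁻¹ ((psiH h g)⁻¹ w))
      = PresentedGroup.of ((psiH h g)⁻¹ w) *
        PresentedGroup.of ((lE h ((psiH h g)⁻¹ w))⁻¹ ((psiH h g)⁻¹ u)) := by
    intro u w
    set a := (psiH h g)⁻¹ u
    set c := (psiH h g)⁻¹ w
    have h1 := of_mul_of h a ((lE h a)⁻¹ c)
    have h2 : lact r a ((lE h a)⁻¹ c) = c := lact_lE_inv h a c
    have h3 : ract r a ((lE h a)⁻¹ c) = (lE h c)⁻¹ a := by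
      rw [ract_eq h a ((lE h a)⁻¹ c), h2]
    rw [h2, h3] at h1
    exact h1
  have e0 : ∀ u w : X, stp h (stp h g u) w
      = g * (PresentedGroup.of ((psiH h g)⁻¹ u) *
          PresentedGroup.of ((lE h ((psiH h g)⁻¹ u))⁻¹ ((psiH h g)⁻¹ w))) := by
    intro u w
    have e0a : stp h (stp h g u) w
        = stp h g u * PresentedGroup.of ((psiH h (stp h g u))⁻¹ w) := rfl
    have e0b : ((psiH h g) * lE h ((psiH h g)⁻¹ u))⁻¹ w
        = (lE h ((psiH h g)⁻¹ u))⁻¹ ((psiH h g)⁻¹ w) := by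
      rw [mul_inv_rev]
      rfl
    rw [e0a, psi_stp, stp, mul_assoc, e0b]
  rw [e0 y z, e0 z y, key y z]

/-- the step permutation of the structure group -/
noncomputable def stepE (h : IsSquareFreeSolution r) (y : X) :
    Equiv.Perm (PresentedGroup (structRels r)) :=
  ⟨fun g => stp h g y, fun g => unstp h g y, fun g => unstp_stp h g y, fun g => stp_unstp h g y⟩

lemma stepE_apply (h : IsSquareFreeSolution r) (y : X) (g : PresentedGroup (structRels r)) :
    stepE h y g = stp h g y := rfl

lemma stepE_inv_apply (h : IsSquareFreeSolution r) (y : X) (g : PresentedGroup (structRels r)) :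
    (stepE h y)⁻¹ g = unstp h g y := rfl

lemma stepE_commute (h : IsSquareFreeSolution r) (y z : X) :
    Commute (stepE h y) (stepE h z) := by
  apply Equiv.ext
  intro g
  show stp h (stp h g z) y = stp h (stp h g y) z
  exact (stp_stp h g y z).symm

/-- the commutative subgroup generated by the step permutations -/
noncomputable def ZS (h : IsSquareFreeSolution r) :
    Subgroup (Equiv.Perm (PresentedGroup (structRels r))) :=
  Subgroup.closure (Set.range (stepE h))

lemma zs_comm (h : IsSquareFreeSolution r) :
    ∀ a ∈ Set.range (stepE h), ∀ b ∈ Set.range (stepE h), a * b = b * a := by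
  rintro a ⟨y, rfl⟩ b ⟨z, rfl⟩
  exact stepE_commute h y z

noncomputable def zsCG (h : IsSquareFreeSolution r) : CommGroup ↥(ZS h) :=
  Subgroup.closureCommGroupOfComm (zs_comm h)

noncomputable def thetaAux (h : IsSquareFreeSolution r) :
    (X →₀ ℤ) →+ Additive ↥(ZS h) :=
  letI := zsCG h
  Finsupp.liftAddHom (fun y => zmultiplesHom _
    (Additive.ofMul (⟨stepE h y, Subgroup.subset_closure (Set.mem_range_self y)⟩ : ↥(ZS h))))

/-- integrating the steps: `theta v` is multiplication (in normal form) by `v` -/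
noncomputable def theta (h : IsSquareFreeSolution r) (v : X →₀ ℤ) :
    Equiv.Perm (PresentedGroup (structRels r)) :=
  ((thetaAux h v).toMul : ↥(ZS h))

lemma theta_add (h : IsSquareFreeSolution r) (v w : X →₀ ℤ) :
    theta h (v + w) = theta h v * theta h w := by
  unfold theta
  rw [map_add]
  rfl

lemma theta_zero (h : IsSquareFreeSolution r) : theta h 0 = 1 := by
  unfold theta
  rw [map_zero]
  rfl

lemma theta_neg (h : IsSquareFreeSolution r) (v : X →₀ ℤ) : theta h (-v) = (theta h v)⁻¹ := by
  unfold theta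
  rw [map_neg]
  rfl

lemma theta_single (h : IsSquareFreeSolution r) (y : X) :
    theta h (Finsupp.single y 1) = stepE h y := by
  letI := zsCG h
  unfold theta thetaAux
  erw [Finsupp.liftAddHom_apply_single, zmultiplesHom_apply, one_zsmul]
  rfl

end Part4
section Part5
variable {r : X × X → X × X}

/-- product of a list of generators/inverses -/
noncomputable def prodOf (r : X × X → X × X) (l : List (X × Bool)) :
    PresentedGroup (structRels r) :=
  (l.map (fun p => cond p.2 (PresentedGroup.of p.1) (PresentedGroup.of p.1)⁻¹)).prod

lemma prodOf_nil : prodOf r [] = 1 := rfl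

lemma prodOf_append (l l' : List (X × Bool)) :
    prodOf r (l ++ l') = prodOf r l * prodOf r l' := by
  unfold prodOf
  rw [List.map_append, List.prod_append]

lemma prodOf_singleton (p : X × Bool) :
    prodOf r [p] = cond p.2 (PresentedGroup.of p.1) (PresentedGroup.of p.1)⁻¹ := by
  unfold prodOf
  simp

lemma exists_list (g : PresentedGroup (structRels r)) :
    ∃ l : List (X × Bool), g = prodOf r l := by
  obtain ⟨w, rfl⟩ := PresentedGroup.mk_surjective (structRels r) g
  induction w with
  | C1 => exact ⟨[], by rw [map_one, prodOf_nil]⟩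
  | of x => exact ⟨[(x, true)], by rw [prodOf_singleton]; rfl⟩
  | inv_of x _ =>
    exact ⟨[(x, false)], by rw [map_inv, prodOf_singleton]; rfl⟩
  | mul x y hx hy =>
    obtain ⟨lx, hlx⟩ := hx
    obtain ⟨ly, hly⟩ := hy
    exact ⟨lx ++ ly, by rw [map_mul, prodOf_append, hlx, hly]⟩

lemma theta_pi_step (h : IsSquareFreeSolution r) (g : PresentedGroup (structRels r)) (x : X)
    (ih : theta h (piF h g) 1 = g) :
    theta h (piF h (g * PresentedGroup.of x)) 1 = g * PresentedGroup.of x := by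
  have hpi : piF h (g * PresentedGroup.of x)
      = Finsupp.single (psiH h g x) 1 + piF h g := by
    rw [pi_mul, pi_of, sAct_single, add_comm]
  rw [hpi, theta_add, theta_single]
  show stepE h (psiH h g x) (theta h (piF h g) 1) = _
  rw [ih, stepE_apply, stp]
  congr 1
  congr 1
  exact Equiv.symm_apply_apply _ _

lemma theta_pi_step' (h : IsSquareFreeSolution r) (g : PresentedGroup (structRels r)) (x : X)
    (ih : theta h (piF h g) 1 = g) :
    theta h (piF h (g * (PresentedGroup.of x)⁻¹)) 1 = g * (PresentedGroup.of x)⁻¹ := by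
  have hpiofinv : piF h ((PresentedGroup.of x : PresentedGroup (structRels r))⁻¹)
      = -(Finsupp.single x 1) := by
    rw [pi_inv, pi_of, psi_of, sAct_single]
    congr 1
    congr 1
    exact lE_inv_self h x
  have hpi : piF h (g * (PresentedGroup.of x)⁻¹)
      = -(Finsupp.single (psiH h g x) 1) + piF h g := by
    rw [pi_mul, hpiofinv, sAct_neg, sAct_single, add_comm]
  rw [hpi, theta_add, theta_neg, theta_single]
  show (stepE h (psiH h g x))⁻¹ (theta h (piF h g) 1) = _
  rw [ih, stepE_inv_apply, unstp]
  congr 2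
  congr 1
  exact Equiv.symm_apply_apply _ _

/-- the normal form theorem: every group element is recovered from its cocycle -/
lemma theta_pi (h : IsSquareFreeSolution r) (g : PresentedGroup (structRels r)) :
    theta h (piF h g) 1 = g := by
  obtain ⟨l, rfl⟩ := exists_list g
  induction l using List.reverseRecOn with
  | nil => rw [prodOf_nil, pi_one, theta_zero]; rfl
  | append_singleton l p ih =>
    rw [prodOf_append, prodOf_singleton]
    rcases p with ⟨x, b⟩
    cases b
    · exact theta_pi_step' h _ x ih
    · exact theta_pi_step h _ x ih

/-- THE key injectivity: the cocycle `piF` is injective -/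
lemma pi_injective (h : IsSquareFreeSolution r) {g g' : PresentedGroup (structRels r)}
    (e : piF h g = piF h g') : g = g' := by
  rw [← theta_pi h g, ← theta_pi h g', e]

end Part5
section Part6
variable {r : X × X → X × X}

/-- the subgroup of `Perm X` of permutations moving points within `relk k`-classes -/
def Nk (r : X × X → X × X) (k : ℕ) : Subgroup (Equiv.Perm X) where
  carrier := {σ | ∀ z, relk (lact r) k (σ z) z}
  one_mem' := fun z => relk_refl _ k z
  mul_mem' := by
    intro a b ha hb z
    exact relk_trans _ _ _ _ _ (ha (b z)) (hb z)
  inv_mem' := by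
    intro a ha z
    have h1 := ha (a⁻¹ z)
    rw [← Equiv.Perm.mul_apply, mul_inv_cancel, Equiv.Perm.one_apply] at h1
    exact relk_symm _ _ _ _ h1

noncomputable def Mk (h : IsSquareFreeSolution r) (k : ℕ) :
    Subgroup (PresentedGroup (structRels r)) :=
  (Nk r k).comap (psiH h)

lemma mem_Mk (h : IsSquareFreeSolution r) (k : ℕ) (g : PresentedGroup (structRels r)) :
    g ∈ Mk h k ↔ ∀ z, relk (lact r) k (psiH h g z) z := Iff.rfl

/-- every element of the permutation group preserves every `relk` -/
lemma psi_pres (h : IsSquareFreeSolution r) (g : PresentedGroup (structRels r)) (k : ℕ)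
    {z z' : X} (hzz : relk (lact r) k z z') :
    relk (lact r) k (psiH h g z) (psiH h g z') := by
  obtain ⟨l, rfl⟩ := exists_list g
  induction l with
  | nil =>
    rw [prodOf_nil, map_one]
    exact hzz
  | cons p l ih =>
    have hc : prodOf r (p :: l) = prodOf r [p] * prodOf r l := by
      rw [← prodOf_append]
      rfl
    rw [hc, map_mul]
    rcases p with ⟨x, b⟩
    cases b
    · have e : psiH h (prodOf r [(x, false)]) = (lE h x)⁻¹ := by
        rw [prodOf_singleton]
        show psiH h (PresentedGroup.of x)⁻¹ = _
        rw [map_inv, psi_of]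
      rw [e]
      exact relk_Q h k x _ _ ih
    · have e : psiH h (prodOf r [(x, true)]) = lE h x := by
        rw [prodOf_singleton]
        show psiH h (PresentedGroup.of x) = _
        rw [psi_of]
      rw [e]
      exact relk_F h k x _ _ ih

/-- normal form map and its permutation part -/
noncomputable def nfG (h : IsSquareFreeSolution r) (v : X →₀ ℤ) :
    PresentedGroup (structRels r) := theta h v 1

noncomputable def LamP (h : IsSquareFreeSolution r) (v : X →₀ ℤ) : Equiv.Perm X :=
  psiH h (nfG h v)

lemma nfG_pi (h : IsSquareFreeSolution r) (g : PresentedGroup (structRels r)) :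
    nfG h (piF h g) = g := theta_pi h g

lemma LamP_pi (h : IsSquareFreeSolution r) (g : PresentedGroup (structRels r)) :
    LamP h (piF h g) = psiH h g := by rw [LamP, nfG_pi]

lemma nfG_add_single (h : IsSquareFreeSolution r) (v : X →₀ ℤ) (y : X) :
    nfG h (v + Finsupp.single y 1) = stp h (nfG h v) y := by
  rw [nfG, add_comm, theta_add, theta_single]
  rfl

lemma LamP_add_single (h : IsSquareFreeSolution r) (v : X →₀ ℤ) (y : X) :
    LamP h (v + Finsupp.single y 1) = LamP h v * lE h ((LamP h v)⁻¹ y) := by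
  rw [LamP, nfG_add_single, psi_stp]
  rfl

/-- pointwise `relk`-equality of permutations -/
def permEq (r : X × X → X × X) (k : ℕ) (σ τ : Equiv.Perm X) : Prop :=
  ∀ z, relk (lact r) k (σ z) (τ z)

lemma permEq_refl (k : ℕ) (σ : Equiv.Perm X) : permEq r k σ σ :=
  fun z => relk_refl _ k _

lemma permEq_symm {k : ℕ} {σ τ : Equiv.Perm X} (e : permEq r k σ τ) : permEq r k τ σ :=
  fun z => relk_symm _ _ _ _ (e z)

lemma permEq_trans {k : ℕ} {σ τ ρ : Equiv.Perm X} (e : permEq r k σ τ)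
    (e' : permEq r k τ ρ) : permEq r k σ ρ :=
  fun z => relk_trans _ _ _ _ _ (e z) (e' z)

/-- the telescoping step -/
lemma telescope_step (h : IsSquareFreeSolution r) (k : ℕ) (u : X →₀ ℤ) (a b : X)
    (hab : relk (lact r) (k+1) a b) :
    permEq r k (LamP h (u + Finsupp.single a 1 - Finsupp.single b 1)) (LamP h u) := by
  set w := u - Finsupp.single b 1 with hw
  have hu : u = w + Finsupp.single b 1 := by rw [hw]; abel
  have hu' : u + Finsupp.single a 1 - Finsupp.single b 1 = w + Finsupp.single a 1 := by
    rw [hw]; abel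
  rw [hu', hu, LamP_add_single, LamP_add_single]
  intro z
  show relk (lact r) k (LamP h w ((lE h ((LamP h w)⁻¹ a)) z))
      (LamP h w ((lE h ((LamP h w)⁻¹ b)) z))
  have h1 : relk (lact r) (k+1) ((LamP h w)⁻¹ a) ((LamP h w)⁻¹ b) := by
    have e : (LamP h w)⁻¹ = psiH h ((nfG h w)⁻¹) := by rw [map_inv]; rfl
    rw [e]
    exact psi_pres h _ (k+1) hab
  have h2 : relk (lact r) k ((lE h ((LamP h w)⁻¹ a)) z) ((lE h ((LamP h w)⁻¹ b)) z) := h1 z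
  have h3 := psi_pres h (nfG h w) k h2
  exact h3

/-- the ℓ¹-norm of an integer-valued finsupp -/
def nrm (v : X →₀ ℤ) : ℕ := v.support.sum fun y => (v y).natAbs

lemma nrm_sum_superset (v : X →₀ ℤ) (s : Finset X) (hs : v.support ⊆ s) :
    nrm v = s.sum fun y => (v y).natAbs := by
  apply Finset.sum_subset hs
  intro y _ hy
  rw [Finsupp.notMem_support_iff.mp hy]
  rfl

lemma nrm_decrease (v : X →₀ ℤ) (a b : X) (ha : 0 < v a) (hb : v b < 0) :
    nrm (v - Finsupp.single a 1 + Finsupp.single b 1) < nrm v := by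
  classical
  have hab : a ≠ b := by intro e; rw [e] at ha; omega
  set v' := v - Finsupp.single a 1 + Finsupp.single b 1 with hv'
  have hva : v' a = v a - 1 := by
    rw [hv']
    rw [Finsupp.add_apply, Finsupp.sub_apply, Finsupp.single_eq_same,
      Finsupp.single_eq_of_ne' (Ne.symm hab)]
    ring
  have hvb : v' b = v b + 1 := by
    rw [hv']
    rw [Finsupp.add_apply, Finsupp.sub_apply, Finsupp.single_eq_of_ne' hab,
      Finsupp.single_eq_same]
    ring
  have hvy : ∀ y, y ≠ a → y ≠ b → v' y = v y := by
    intro y hya hyb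
    rw [hv', Finsupp.add_apply, Finsupp.sub_apply, Finsupp.single_eq_of_ne' (Ne.symm hya),
      Finsupp.single_eq_of_ne' (Ne.symm hyb)]
    ring
  have hain : a ∈ v.support := Finsupp.mem_support_iff.mpr (by omega)
  have hbin : b ∈ v.support := Finsupp.mem_support_iff.mpr (by omega)
  set s := v.support ∪ v'.support with hs
  have hsup : v.support ⊆ s := Finset.subset_union_left
  have hsup' : v'.support ⊆ s := Finset.subset_union_right
  have hains : a ∈ s := hsup hain
  have hbins : b ∈ s := hsup hbin
  have hblem : b ∈ s.erase a := Finset.mem_erase.mpr ⟨Ne.symm hab, hbins⟩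
  have ev : ∀ u : X →₀ ℤ, s.sum (fun y => (u y).natAbs)
      = (u a).natAbs + ((u b).natAbs + ((s.erase a).erase b).sum (fun y => (u y).natAbs)) := by
    intro u
    rw [← Finset.add_sum_erase s _ hains, ← Finset.add_sum_erase _ _ hblem]
  have hrest : ((s.erase a).erase b).sum (fun y => (v' y).natAbs)
      = ((s.erase a).erase b).sum (fun y => (v y).natAbs) := by
    apply Finset.sum_congr rfl
    intro y hy
    have h1 := Finset.mem_erase.mp hy
    have h2 := Finset.mem_erase.mp h1.2
    rw [hvy y h2.1 h1.1]
  rw [nrm_sum_superset v s hsup, nrm_sum_superset v' s hsup', ev v, ev v', hrest, hva, hvb]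
  omega

/-- class-sums: evaluation of `mapDomain` -/
lemma mapDomain_eval {Q : Type*} [DecidableEq Q] (f : X → Q) (v : X →₀ ℤ) (c : Q) :
    (Finsupp.mapDomain f v) c = v.support.sum (fun y => if f y = c then v y else 0) := by
  classical
  rw [Finsupp.mapDomain, Finsupp.sum_apply]
  apply Finset.sum_congr rfl
  intro y _
  simp [Finsupp.single_apply]

lemma mapDomain_sub' {Q : Type*} (f : X → Q) (v w : X →₀ ℤ) :
    Finsupp.mapDomain f (v - w) = Finsupp.mapDomain f v - Finsupp.mapDomain f w :=
  map_sub (Finsupp.mapDomain.addMonoidHom f) v w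

lemma mapDomain_neg' {Q : Type*} (f : X → Q) (v : X →₀ ℤ) :
    Finsupp.mapDomain f (-v) = -Finsupp.mapDomain f v :=
  map_neg (Finsupp.mapDomain.addMonoidHom f) v

end Part6
section Part7
variable {r : X × X → X × X}

/-- the setoid of the `k`-th retract -/
def relSetoid (r : X × X → X × X) (k : ℕ) : Setoid X :=
  ⟨relk (lact r) k,
    ⟨fun x => relk_refl _ k x, fun hxy => relk_symm _ _ _ _ hxy,
      fun h1 h2 => relk_trans _ _ _ _ _ h1 h2⟩⟩

lemma nrm_pos {v : X →₀ ℤ} (hv : v ≠ 0) : 0 < nrm v := by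
  obtain ⟨a, ha⟩ := Finsupp.support_nonempty_iff.mpr hv
  have h1 : (v a).natAbs ≠ 0 := by
    have := Finsupp.mem_support_iff.mp ha
    omega
  have h2 : (v a).natAbs ≤ v.support.sum fun y => (v y).natAbs :=
    Finset.single_le_sum (f := fun y => (v y).natAbs) (fun y _ => Nat.zero_le _) ha
  have h3 : nrm v = v.support.sum fun y => (v y).natAbs := rfl
  omega

lemma LamP_zero (h : IsSquareFreeSolution r) : LamP h 0 = 1 := by
  have h1 : nfG h 0 = 1 := by rw [nfG, theta_zero]; rfl
  rw [LamP, h1, map_one]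

/-- main telescoping lemma: an element whose level-(k+1) class-vector vanishes
acts trivially at level k -/
lemma vanish (h : IsSquareFreeSolution r) (k : ℕ) :
    ∀ n (v : X →₀ ℤ), nrm v ≤ n →
      Finsupp.mapDomain (Quotient.mk (relSetoid r (k+1))) v = 0 →
      permEq r k (LamP h v) 1 := by
  intro n
  induction n with
  | zero =>
    intro v hn _
    have hv0 : v = 0 := by
      by_contra hne
      have := nrm_pos hne
      omega
    rw [hv0, LamP_zero h]
    exact permEq_refl _ _
  | succ n ih =>
    intro v hn hq
    by_cases hv0 : v = 0
    · rw [hv0, LamP_zero h]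
      exact permEq_refl _ _
    · classical
      set q : X → Quotient (relSetoid r (k+1)) := Quotient.mk (relSetoid r (k+1)) with hqdef
      obtain ⟨a, hain⟩ := Finsupp.support_nonempty_iff.mpr hv0
      have hva : v a ≠ 0 := Finsupp.mem_support_iff.mp hain
      have hsum : ∀ c, v.support.sum (fun y => if q y = c then v y else 0) = 0 := by
        intro c
        rw [← mapDomain_eval q v c, hq]
        rfl
      -- find positive and negative entries in the class of `a`
      have key : ∃ p nn : X, q p = q a ∧ q nn = q a ∧ 0 < v p ∧ v nn < 0 := by
        have hexn : ∃ nn ∈ v.support, q nn = q a ∧ v nn < 0 := by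
          by_contra hno
          push_neg at hno
          have hpos : 0 < v.support.sum (fun y => if q y = q a then v y else 0) := by
            apply Finset.sum_pos'
            · intro y hy
              by_cases hc : q y = q a
              · rw [if_pos hc]
                exact hno y hy hc
              · rw [if_neg hc]
            · refine ⟨a, hain, ?_⟩
              rw [if_pos rfl]
              rcases lt_or_gt_of_ne hva with hlt | hgt
              · exact absurd hlt (not_lt.mpr (hno a hain rfl))
              · exact hgt
          rw [hsum (q a)] at hpos
          exact lt_irrefl _ hpos
        have hexp : ∃ p ∈ v.support, q p = q a ∧ 0 < v p := by
          by_contra hno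
          push_neg at hno
          have hneg : v.support.sum (fun y => if q y = q a then v y else 0) < 0 := by
            have hnonpos : ∀ y ∈ v.support, (if q y = q a then v y else 0) ≤ 0 := by
              intro y hy
              by_cases hc : q y = q a
              · rw [if_pos hc]
                exact hno y hy hc
              · rw [if_neg hc]
            obtain ⟨nn, hnn, hnnq, hnnneg⟩ := hexn
            have hlt : (if q nn = q a then v nn else 0) < 0 := by
              rw [if_pos hnnq]
              exact hnnneg
            calc v.support.sum (fun y => if q y = q a then v y else 0)
                < v.support.sum (fun _ => (0 : ℤ)) := by
                  apply Finset.sum_lt_sum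
                  · exact hnonpos
                  · exact ⟨nn, hnn, hlt⟩
              _ = 0 := by rw [Finset.sum_const, smul_zero]
          rw [hsum (q a)] at hneg
          exact lt_irrefl _ hneg
        obtain ⟨p, _, hpq, hpp⟩ := hexp
        obtain ⟨nn, _, hnq, hnn⟩ := hexn
        exact ⟨p, nn, hpq, hnq, hpp, hnn⟩
      obtain ⟨p, nn, hpq, hnq, hpp, hnneg⟩ := key
      set v' := v - Finsupp.single p 1 + Finsupp.single nn 1 with hv'
      have hrel : relk (lact r) (k+1) p nn := Quotient.exact (hpq.trans hnq.symm)
      have hnrm : nrm v' ≤ n := by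
        have hd := nrm_decrease v p nn hpp hnneg
        rw [← hv'] at hd
        omega
      have hq' : Finsupp.mapDomain q v' = 0 := by
        have e1 : Finsupp.mapDomain q v'
            = Finsupp.mapDomain q v - Finsupp.single (q p) 1 + Finsupp.single (q nn) 1 := by
          rw [hv']
          rw [Finsupp.mapDomain_add, mapDomain_sub', Finsupp.mapDomain_single,
            Finsupp.mapDomain_single]
        rw [e1, hq, hpq, hnq]
        abel
      have ih' := ih v' hnrm hq'
      have hdecomp : v = v' + Finsupp.single p 1 - Finsupp.single nn 1 := by
        rw [hv']
        abel
      have step : permEq r k (LamP h v) (LamP h v') := by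
        rw [hdecomp]
        exact telescope_step h k v' p nn hrel
      exact permEq_trans step ih'

lemma mapq_sAct (h : IsSquareFreeSolution r) (k : ℕ) {g : PresentedGroup (structRels r)}
    (hg : g ∈ Mk h (k+1)) (w : X →₀ ℤ) :
    Finsupp.mapDomain (Quotient.mk (relSetoid r (k+1))) (sAct (psiH h g) w)
      = Finsupp.mapDomain (Quotient.mk (relSetoid r (k+1))) w := by
  rw [sAct, Finsupp.equivMapDomain_eq_mapDomain, ← Finsupp.mapDomain_comp]
  congr 1
  funext z
  exact Quotient.sound (hg z)

open scoped commutatorElement in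
lemma commutator_Mk (h : IsSquareFreeSolution r) (k : ℕ)
    {a b : PresentedGroup (structRels r)} (ha : a ∈ Mk h (k+1)) (hb : b ∈ Mk h (k+1)) :
    ⁅a, b⁆ ∈ Mk h k := by
  set q : X → Quotient (relSetoid r (k+1)) := Quotient.mk (relSetoid r (k+1)) with hqdef
  have hab : a * b ∈ Mk h (k+1) := mul_mem ha hb
  have haba : a * b * a⁻¹ ∈ Mk h (k+1) := mul_mem hab (inv_mem ha)
  have hainv : a⁻¹ ∈ Mk h (k+1) := inv_mem ha
  have hbinv : b⁻¹ ∈ Mk h (k+1) := inv_mem hb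
  have hP : Finsupp.mapDomain q (piF h ⁅a, b⁆) = 0 := by
    have e0 : ⁅a, b⁆ = a * b * a⁻¹ * b⁻¹ := commutatorElement_def a b
    have einva : Finsupp.mapDomain q (piF h a⁻¹) = -Finsupp.mapDomain q (piF h a) := by
      rw [pi_inv, mapDomain_neg']
      have : (psiH h a)⁻¹ = psiH h a⁻¹ := (map_inv _ _).symm
      rw [this, mapq_sAct h k hainv]
    have einvb : Finsupp.mapDomain q (piF h b⁻¹) = -Finsupp.mapDomain q (piF h b) := by
      rw [pi_inv, mapDomain_neg']
      have : (psiH h b)⁻¹ = psiH h b⁻¹ := (map_inv _ _).symm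
      rw [this, mapq_sAct h k hbinv]
    rw [e0, pi_mul h (a * b * a⁻¹) b⁻¹, pi_mul h (a * b) a⁻¹, pi_mul h a b]
    rw [Finsupp.mapDomain_add, Finsupp.mapDomain_add, Finsupp.mapDomain_add]
    rw [mapq_sAct h k ha, mapq_sAct h k hab, mapq_sAct h k haba, einva, einvb]
    abel
  have hvan := vanish h k (nrm (piF h ⁅a, b⁆)) (piF h ⁅a, b⁆) le_rfl hP
  rw [LamP_pi] at hvan
  intro z
  have := hvan z
  exact this

open scoped commutatorElement in
lemma commutator_M0 (h : IsSquareFreeSolution r)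
    {a b : PresentedGroup (structRels r)} (ha : a ∈ Mk h 0) (hb : b ∈ Mk h 0) :
    ⁅a, b⁆ = 1 := by
  have hA : psiH h a = 1 := Equiv.ext fun z => ha z
  have hB : psiH h b = 1 := Equiv.ext fun z => hb z
  have hAB : psiH h (a * b) = 1 := by rw [map_mul, hA, hB, mul_one]
  have hABA : psiH h (a * b * a⁻¹) = 1 := by rw [map_mul, map_inv, hA, hAB, inv_one, one_mul]
  have hP : piF h ⁅a, b⁆ = 0 := by
    have e0 : ⁅a, b⁆ = a * b * a⁻¹ * b⁻¹ := commutatorElement_def a b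
    have einva : piF h a⁻¹ = -piF h a := by
      rw [pi_inv, hA]
      rw [inv_one, sAct_one]
    have einvb : piF h b⁻¹ = -piF h b := by
      rw [pi_inv, hB]
      rw [inv_one, sAct_one]
    rw [e0, pi_mul h (a * b * a⁻¹) b⁻¹, pi_mul h (a * b) a⁻¹, pi_mul h a b]
    rw [hA, hAB, hABA, sAct_one, sAct_one, sAct_one, einva, einvb]
    abel
  apply pi_injective h
  rw [hP, pi_one]

end Part7
section Part8
variable {r : X × X → X × X}

lemma gen_mem_Nk (h : IsSquareFreeSolution r) {m : ℕ} (hm : 1 ≤ m)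
    (hmpl : mplLe (lact r) m) (x : X) : lE h x ∈ Nk r (m - 1) := by
  intro z
  have h1 : relk (lact r) (m - 1 + 1) x z := by
    rw [Nat.sub_add_cancel hm]
    exact hmpl x z
  have h2 := h1 z
  rw [sq1 h z] at h2
  exact h2

lemma top_Mk (h : IsSquareFreeSolution r) {m : ℕ} (hm : 1 ≤ m)
    (hmpl : mplLe (lact r) m) (g : PresentedGroup (structRels r)) : g ∈ Mk h (m - 1) := by
  obtain ⟨l, rfl⟩ := exists_list g
  induction l with
  | nil =>
    rw [prodOf_nil]
    exact one_mem _
  | cons p l ih =>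
    have hc : prodOf r (p :: l) = prodOf r [p] * prodOf r l := by
      rw [← prodOf_append]; rfl
    rw [hc]
    apply mul_mem _ ih
    rcases p with ⟨x, b⟩
    have hofmem : (PresentedGroup.of x : PresentedGroup (structRels r)) ∈ Mk h (m - 1) := by
      show psiH h (PresentedGroup.of x) ∈ Nk r (m - 1)
      rw [psi_of]
      exact gen_mem_Nk h hm hmpl x
    cases b
    · rw [prodOf_singleton]
      exact inv_mem hofmem
    · rw [prodOf_singleton]
      exact hofmem

lemma derived_le_Mk (h : IsSquareFreeSolution r) {m : ℕ} (hm : 1 ≤ m)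
    (hmpl : mplLe (lact r) m) :
    ∀ i, derivedSeries (PresentedGroup (structRels r)) i ≤ Mk h (m - 1 - i) := by
  intro i
  induction i with
  | zero =>
    rw [Nat.sub_zero, derivedSeries_zero]
    exact fun g _ => top_Mk h hm hmpl g
  | succ i ih =>
    rw [derivedSeries_succ]
    rcases Nat.lt_or_ge i (m - 1) with hlt | hge
    · have harith : m - 1 - i = (m - 1 - (i + 1)) + 1 := by omega
      rw [harith] at ih
      rw [Subgroup.commutator_le]
      intro a ha b hb
      exact commutator_Mk h _ (ih ha) (ih hb)
    · have h0 : m - 1 - i = 0 := by omega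
      have h0' : m - 1 - (i + 1) = 0 := by omega
      rw [h0] at ih
      rw [h0', Subgroup.commutator_le]
      intro a ha b hb
      rw [commutator_M0 h (ih ha) (ih hb)]
      exact one_mem _

/-- first half of the theorem -/
lemma derived_G (h : IsSquareFreeSolution r) {m : ℕ} (hm : 1 ≤ m)
    (hmpl : mplLe (lact r) m) :
    derivedSeries (PresentedGroup (structRels r)) m = ⊥ := by
  rw [eq_bot_iff]
  have hm' : m = (m - 1) + 1 := (Nat.sub_add_cancel hm).symm
  rw [hm', derivedSeries_succ, Subgroup.commutator_le]
  intro a ha b hb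
  have hM := derived_le_Mk h hm hmpl (m - 1)
  rw [Nat.sub_self] at hM
  rw [Subgroup.mem_bot]
  exact commutator_M0 h (hM ha) (hM hb)

lemma lE_mem_lperms (h : IsSquareFreeSolution r) (x : X) : lE h x ∈ lperms r :=
  ⟨x, fun _ => rfl⟩

lemma psi_mem_Gcal (h : IsSquareFreeSolution r) (g : PresentedGroup (structRels r)) :
    psiH h g ∈ Gcal r := by
  obtain ⟨l, rfl⟩ := exists_list g
  induction l with
  | nil =>
    rw [prodOf_nil, map_one]
    exact one_mem _
  | cons p l ih =>
    have hc : prodOf r (p :: l) = prodOf r [p] * prodOf r l := by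
      rw [← prodOf_append]; rfl
    rw [hc, map_mul]
    apply mul_mem _ ih
    rcases p with ⟨x, b⟩
    have hgen : lE h x ∈ Gcal r := Subgroup.subset_closure (lE_mem_lperms h x)
    cases b
    · rw [prodOf_singleton]
      show psiH h (PresentedGroup.of x)⁻¹ ∈ Gcal r
      rw [map_inv, psi_of]
      exact inv_mem hgen
    · rw [prodOf_singleton]
      show psiH h (PresentedGroup.of x) ∈ Gcal r
      rw [psi_of]
      exact hgen

/-- the corestriction of `psiH` to the permutation group -/
noncomputable def psiG (h : IsSquareFreeSolution r) :
    PresentedGroup (structRels r) →* ↥(Gcal r) :=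
  (psiH h).codRestrict (Gcal r) (psi_mem_Gcal h)

lemma psiG_surjective (h : IsSquareFreeSolution r) : Function.Surjective (psiG h) := by
  rintro ⟨s, hs⟩
  have : ∃ g, psiH h g = s := by
    refine Subgroup.closure_induction ?_ ?_ ?_ ?_ hs
    · rintro σ ⟨x, hx⟩
      refine ⟨PresentedGroup.of x, ?_⟩
      rw [psi_of]
      ext y
      exact (hx y).symm
    · exact ⟨1, map_one _⟩
    · rintro σ τ _ _ ⟨g, rfl⟩ ⟨g', rfl⟩
      exact ⟨g * g', map_mul _ _ _⟩
    · rintro σ _ ⟨g, rfl⟩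
      exact ⟨g⁻¹, map_inv _ _⟩
  obtain ⟨g, hg⟩ := this
  exact ⟨g, Subtype.ext hg⟩

/-- second half of the theorem -/
lemma derived_Gcal (h : IsSquareFreeSolution r) {m : ℕ} (hm : 1 ≤ m)
    (hmpl : mplLe (lact r) m) :
    derivedSeries (↥(Gcal r)) (m - 1) = ⊥ := by
  rw [eq_bot_iff]
  have h1 := derivedSeries_le_map_derivedSeries (psiG_surjective h) (m - 1)
  refine le_trans h1 ?_
  have hM := derived_le_Mk h hm hmpl (m - 1)
  rw [Nat.sub_self] at hM
  intro s hs
  rw [Subgroup.mem_map] at hs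
  obtain ⟨g, hg, rfl⟩ := hs
  have hg0 : psiH h g = 1 := Equiv.ext fun z => hM hg z
  rw [Subgroup.mem_bot]
  apply Subtype.ext
  exact hg0

end Part8

/-- a multipermutation square-free solution of level `m ≥ 1` has
solvable structure group of solvable length `≤ m` and solvable permutation group
of solvable length `≤ m - 1`. -/
theorem stmt11 {X : Type*} (r : X × X → X × X) (h : IsSquareFreeSolution r)
    (m : ℕ) (hm : 1 ≤ m) (hmpl : mplEq (lact r) m) :
    derivedSeries (PresentedGroup (structRels r)) m = ⊥ ∧
    derivedSeries (↥(Gcal r)) (m - 1) = ⊥ :=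
  ⟨derived_G h hm hmpl.1, derived_Gcal h hm hmpl.1⟩

end YBPaper
end
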